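/- arXiv:2107.06817 — 3 statements merged into one kernel-verified Lean document; each statement's English description precedes it below -/
import Mathlib

section
/- For every pair of indices i, j, the dot product τ_{i,j} · L_V equals (w_max·cos(a_i, v_j) + w_avg·avg(ps)) / (w_max + w_avg), where cos(a_i,v_j) = (a_i·v_j)/(‖a_i‖‖v_j‖) and avg(ps) is the average of all N² pairwise cosine similarities between A and V. -/
open scoped BigOperators

noncomputable def cosSim {D : ℕ} (a b : EuclideanSpace ℝ (Fin D)) : ℝ :=
  (inner ℝ a b : ℝ) / (‖a‖ * ‖b‖)

noncomputable def avgSim {D m n : ℕ} (A : Fin m → EuclideanSpace ℝ (Fin D))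
    (V : Fin n → EuclideanSpace ℝ (Fin D)) : ℝ :=
  (∑ i, ∑ j, cosSim (A i) (V j)) / ((m : ℝ) * (n : ℝ))

noncomputable def maxSim {D m n : ℕ} (A : Fin m → EuclideanSpace ℝ (Fin D))
    (V : Fin n → EuclideanSpace ℝ (Fin D)) : ℝ :=
  ⨆ p : Fin m × Fin n, cosSim (A p.1) (V p.2)

noncomputable def simSet {D m n : ℕ} (wmax wavg : ℝ) (A : Fin m → EuclideanSpace ℝ (Fin D))
    (V : Fin n → EuclideanSpace ℝ (Fin D)) : ℝ :=
  (wmax * maxSim A V + wavg * avgSim A V) / (wmax + wavg)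

noncomputable def fpair {D m n : ℕ} (wmax wavg : ℝ) (A : Fin m → EuclideanSpace ℝ (Fin D))
    (V : Fin n → EuclideanSpace ℝ (Fin D)) (i : Fin m) (j : Fin n) : ℝ :=
  (wmax * cosSim (A i) (V j) + wavg * avgSim A V) / (wmax + wavg)

lemma cosSim_eq {D : ℕ} (a b : EuclideanSpace ℝ (Fin D)) :
    cosSim a b = ∑ d, (‖a‖⁻¹ * a d) * (‖b‖⁻¹ * b d) := by
  simp only [cosSim, PiLp.inner_apply, RCLike.inner_apply, conj_trivial]
  rw [Finset.sum_div]
  refine Finset.sum_congr rfl fun d _ => ?_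
  rw [div_eq_mul_inv, mul_inv]
  ring

theorem stmt2 (D N : ℕ) (hN : 0 < N) (wmax wavg : ℝ) (hw1 : 0 < wmax) (hw2 : 0 < wavg)
    (A V : Fin N → EuclideanSpace ℝ (Fin D))
    (hA : ∀ i, A i ≠ 0) (hV : ∀ j, V j ≠ 0) (i j : Fin N) :
    (∑ j' : Fin N, ∑ i' : Fin N, ∑ d : Fin D,
        ((wmax * ((if j' = j ∧ i' = i then (1 : ℝ) else 0) * (‖A i'‖⁻¹ * A i' d))
            + (wavg / ((N : ℝ) * (N : ℝ))) * (‖A i'‖⁻¹ * A i' d)) / (wmax + wavg))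
          * (‖V j'‖⁻¹ * V j' d))
      = (wmax * cosSim (A i) (V j) + wavg * avgSim A V) / (wmax + wavg) := by
  set S : Fin N → Fin N → ℝ := fun i' j' => ∑ d, (‖A i'‖⁻¹ * A i' d) * (‖V j'‖⁻¹ * V j' d)
    with hS
  have step : ∀ j' i', (∑ d : Fin D,
        ((wmax * ((if j' = j ∧ i' = i then (1 : ℝ) else 0) * (‖A i'‖⁻¹ * A i' d))
            + (wavg / ((N : ℝ) * (N : ℝ))) * (‖A i'‖⁻¹ * A i' d)) / (wmax + wavg))
          * (‖V j'‖⁻¹ * V j' d))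
      = (wmax * (if j' = j ∧ i' = i then (1 : ℝ) else 0) / (wmax + wavg)) * S i' j'
        + ((wavg / ((N : ℝ) * (N : ℝ))) / (wmax + wavg)) * S i' j' := by
    intro j' i'
    rw [hS]
    simp only [Finset.mul_sum, ← Finset.sum_add_distrib]
    refine Finset.sum_congr rfl fun d _ => ?_
    ring
  simp only [step, Finset.sum_add_distrib]
  have h1 : (∑ j' : Fin N, ∑ i' : Fin N,
      (wmax * (if j' = j ∧ i' = i then (1 : ℝ) else 0) / (wmax + wavg)) * S i' j')
      = (wmax / (wmax + wavg)) * S i j := by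
    simp [mul_ite, mul_one, mul_zero, ite_and, ite_div, zero_div, ite_mul, zero_mul, Finset.sum_ite_eq']
  have h2 : (∑ j' : Fin N, ∑ i' : Fin N,
      ((wavg / ((N : ℝ) * (N : ℝ))) / (wmax + wavg)) * S i' j')
      = ((wavg / ((N : ℝ) * (N : ℝ))) / (wmax + wavg)) * ∑ i' : Fin N, ∑ j' : Fin N, S i' j' := by
    rw [Finset.sum_comm]
    simp only [← Finset.mul_sum]
  have hSij : cosSim (A i) (V j) = S i j := cosSim_eq _ _
  have hcs : avgSim A V = (∑ i' : Fin N, ∑ j' : Fin N, S i' j') / ((N:ℝ) * (N:ℝ)) := by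
    simp only [avgSim, cosSim_eq]
    rfl
  rw [h1, h2, hSij, hcs]
  have hNne : ((N:ℝ) * (N:ℝ)) ≠ 0 := by positivity
  have hWne : wmax + wavg ≠ 0 := by positivity
  field_simp
end

section
/- The search method is correct: max over candidates V of sim(A, V) equals max over pairs (i,j) of (τ_{i,j} dotted with its best candidate long vector), and any candidate achieving this double maximum is an optimal candidate (i.e., maximizes sim(A, ·)). -/
open scoped BigOperators

lemma fpair_le_simSet {D m n : ℕ} (wmax wavg : ℝ) (hw1 : 0 < wmax) (hw2 : 0 < wavg)
    (A : Fin m → EuclideanSpace ℝ (Fin D)) (V : Fin n → EuclideanSpace ℝ (Fin D))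
    (i : Fin m) (j : Fin n) :
    fpair wmax wavg A V i j ≤ simSet wmax wavg A V := by
  unfold fpair simSet
  have hcos : cosSim (A i) (V j) ≤ maxSim A V := by
    unfold maxSim
    exact le_ciSup (f := fun p : Fin m × Fin n => cosSim (A p.1) (V p.2))
      (Set.Finite.bddAbove (Set.finite_range _)) (⟨i, j⟩ : Fin m × Fin n)
  have : wmax * cosSim (A i) (V j) ≤ wmax * maxSim A V :=
    mul_le_mul_of_nonneg_left hcos hw1.le
  apply div_le_div_of_nonneg_right ?_ (by linarith) |>.trans_eq rfl
  linarith

lemma simSet_eq_fpair {D m n : ℕ} [NeZero m] [NeZero n] (wmax wavg : ℝ)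
    (A : Fin m → EuclideanSpace ℝ (Fin D)) (V : Fin n → EuclideanSpace ℝ (Fin D)) :
    ∃ i j, simSet wmax wavg A V = fpair wmax wavg A V i j := by
  obtain ⟨p, hp⟩ := Finite.exists_max (fun p : Fin m × Fin n => cosSim (A p.1) (V p.2))
  refine ⟨p.1, p.2, ?_⟩
  unfold simSet fpair
  have : maxSim A V = cosSim (A p.1) (V p.2) := by
    unfold maxSim
    apply le_antisymm
    · exact ciSup_le hp
    · exact le_ciSup (f := fun p : Fin m × Fin n => cosSim (A p.1) (V p.2))
        (Set.Finite.bddAbove (Set.finite_range _)) p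
  rw [this]

theorem stmt6 (D N : ℕ) (hN : 0 < N) (wmax wavg : ℝ) (hw1 : 0 < wmax) (hw2 : 0 < wavg)
    (A : Fin N → EuclideanSpace ℝ (Fin D)) (hA : ∀ i, A i ≠ 0)
    (C : Finset (Fin N → EuclideanSpace ℝ (Fin D))) (hC : C.Nonempty)
    (hCz : ∀ V ∈ C, ∀ j, V j ≠ 0)
    (Vsel : Fin N → Fin N → (Fin N → EuclideanSpace ℝ (Fin D)))
    (hVselMem : ∀ i j, Vsel i j ∈ C)
    (hVselMax : ∀ i j, ∀ V ∈ C, fpair wmax wavg A V i j ≤ fpair wmax wavg A (Vsel i j) i j) :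
    ∀ iopt jopt : Fin N,
      (∀ i j, fpair wmax wavg A (Vsel i j) i j ≤ fpair wmax wavg A (Vsel iopt jopt) iopt jopt) →
      (C.sup' hC (fun V => simSet wmax wavg A V) = fpair wmax wavg A (Vsel iopt jopt) iopt jopt ∧
       ∀ W ∈ C, simSet wmax wavg A W ≤ simSet wmax wavg A (Vsel iopt jopt)) := by
  intro iopt jopt hopt
  set M := fpair wmax wavg A (Vsel iopt jopt) iopt jopt with hM
  have key : ∀ W ∈ C, simSet wmax wavg A W ≤ M := by
    intro W hW
    have : NeZero N := ⟨hN.ne'⟩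
    obtain ⟨i, j, hij⟩ := simSet_eq_fpair wmax wavg A W
    rw [hij]
    exact (hVselMax i j W hW).trans (hopt i j)
  have hMle : M ≤ simSet wmax wavg A (Vsel iopt jopt) :=
    fpair_le_simSet wmax wavg hw1 hw2 A _ _ _
  have hsup_le : C.sup' hC (fun V => simSet wmax wavg A V) ≤ M :=
    Finset.sup'_le hC _ key
  have hle_sup : simSet wmax wavg A (Vsel iopt jopt) ≤
      C.sup' hC (fun V => simSet wmax wavg A V) :=
    Finset.le_sup' _ (hVselMem iopt jopt)
  constructor
  · exact le_antisymm hsup_le (hMle.trans hle_sup)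
  · intro W hW
    exact (key W hW).trans hMle
end

section
/- In the varying-cardinality construction, for indices i ∈ [1,m], j ∈ [1,n], the dot product τ_{i,j}^n · L_V^m equals (w_max·cos(a_i,v_j) + w_avg·avg(ps))/(w_max + w_avg), where avg(ps) is the average of all m·n pairwise cosine similarities. -/
open scoped BigOperators

theorem stmt12 (D m n : ℕ) (hm : 0 < m) (hn : 0 < n)
    (wmax wavg : ℝ) (hw1 : 0 < wmax) (hw2 : 0 < wavg)
    (A : Fin m → EuclideanSpace ℝ (Fin D)) (V : Fin n → EuclideanSpace ℝ (Fin D))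
    (hA : ∀ i, A i ≠ 0) (hV : ∀ j, V j ≠ 0) (i : Fin m) (j : Fin n) :
    (∑ j' : Fin n, ∑ i' : Fin m, ∑ d : Fin D,
        ((wmax * ((if j' = j ∧ i' = i then (1 : ℝ) else 0) * (‖A i'‖⁻¹ * A i' d))
            + (wavg / ((m : ℝ) * (n : ℝ))) * (‖A i'‖⁻¹ * A i' d)) / (wmax + wavg))
          * (‖V j'‖⁻¹ * V j' d))
      = (wmax * cosSim (A i) (V j) + wavg * avgSim A V) / (wmax + wavg) := by
  have hW : wmax + wavg ≠ 0 := by positivity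
  have hmn : ((m:ℝ) * (n:ℝ)) ≠ 0 := by positivity
  have key : ∀ (x y : EuclideanSpace ℝ (Fin D)),
      ∑ d, (‖x‖⁻¹ * x d) * (‖y‖⁻¹ * y d) = cosSim x y := by
    intro x y
    have h1 : ∑ d, (‖x‖⁻¹ * x d) * (‖y‖⁻¹ * y d)
        = (∑ d, x d * y d) * (‖x‖⁻¹ * ‖y‖⁻¹) := by
      rw [Finset.sum_mul]; exact Finset.sum_congr rfl fun d _ => by ring
    rw [h1, cosSim]
    simp only [PiLp.inner_apply, RCLike.inner_apply, conj_trivial, div_eq_mul_inv, mul_inv]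
    simp only [mul_comm]
  have step : ∀ (j' : Fin n) (i' : Fin m), (∑ d : Fin D,
      ((wmax * ((if j' = j ∧ i' = i then (1 : ℝ) else 0) * (‖A i'‖⁻¹ * A i' d))
          + (wavg / ((m : ℝ) * (n : ℝ))) * (‖A i'‖⁻¹ * A i' d)) / (wmax + wavg))
        * (‖V j'‖⁻¹ * V j' d))
      = ((wmax * (if j' = j ∧ i' = i then (1:ℝ) else 0) + wavg/((m:ℝ)*(n:ℝ)))
          / (wmax+wavg)) * cosSim (A i') (V j') := by
    intro j' i'
    rw [← key (A i') (V j'), Finset.mul_sum]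
    exact Finset.sum_congr rfl fun d _ => by ring
  simp only [step]
  have expand : ∀ (j' : Fin n) (i' : Fin m),
      ((wmax * (if j' = j ∧ i' = i then (1:ℝ) else 0) + wavg/((m:ℝ)*(n:ℝ)))
          / (wmax+wavg)) * cosSim (A i') (V j')
      = (if i' = i then (if j' = j then wmax / (wmax+wavg) * cosSim (A i') (V j') else 0) else 0)
        + wavg/((m:ℝ)*(n:ℝ))/(wmax+wavg) * cosSim (A i') (V j') := by
    intro j' i'
    by_cases h1 : j' = j <;> by_cases h2 : i' = i <;> simp [h1, h2] <;> ring
  simp only [expand, Finset.sum_add_distrib, Finset.sum_ite_eq', Finset.mem_univ, if_true]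
  conv_lhs => rw [show (∑ j' : Fin n, ∑ i' : Fin m,
      wavg/((m:ℝ)*(n:ℝ))/(wmax+wavg) * cosSim (A i') (V j'))
    = wavg/((m:ℝ)*(n:ℝ))/(wmax+wavg) * ∑ i' : Fin m, ∑ j' : Fin n, cosSim (A i') (V j') by
      rw [Finset.sum_comm]; simp [Finset.mul_sum]]
  rw [avgSim]
  field_simp
end
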